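/- arXiv:1102.3657 — 4 statements merged into one kernel-verified Lean document; each statement's English description precedes it below -/
import Mathlib

section
/- Let G be a topological group, Y a Hausdorff locally convex real topological vector space, and φ : G → Y a function of class LUC¹. If X, X₁, X₂ are one-parameter subgroups of G with X = X₁ + X₂ in the Trotter sense, then for every g ∈ G one has (D_X φ)(g) = (D_{X₁} φ)(g) + (D_{X₂} φ)(g). -/
open Filter Topology Pointwise

/-- A one-parameter subgroup of a topological group `G`: a continuous homomorphism
from the additive group of reals into `G`. -/
structure OneParamSubgroup (G : Type*) [Group G] [TopologicalSpace G] where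
  toFun : ℝ → G
  continuous_toFun : Continuous toFun
  map_add : ∀ s t : ℝ, toFun (s + t) = toFun s * toFun t

/-- `X = X₁ + X₂` in the Trotter sense: `(X₁(t/n) X₂(t/n))^n → X(t)` uniformly on
compact subsets of `ℝ`. -/
def TrotterSum {G : Type*} [Group G] [TopologicalSpace G]
    (X X₁ X₂ : OneParamSubgroup G) : Prop :=
  ∀ K : Set ℝ, IsCompact K → ∀ W ∈ 𝓝 (1 : G), ∃ N : ℕ, ∀ n : ℕ, N ≤ n → ∀ t ∈ K,
    (X.toFun t)⁻¹ * (X₁.toFun (t / (n : ℝ)) * X₂.toFun (t / (n : ℝ))) ^ n ∈ W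

/-- `(D_X φ)(g)` exists and equals `z`. -/
def HasDirDerivAt {G Y : Type*} [Group G] [TopologicalSpace G]
    [AddCommGroup Y] [Module ℝ Y] [TopologicalSpace Y]
    (φ : G → Y) (X : OneParamSubgroup G) (g : G) (z : Y) : Prop :=
  Tendsto (fun t : ℝ => t⁻¹ • (φ (g * X.toFun t) - φ g)) (𝓝[≠] (0 : ℝ)) (𝓝 z)

/-- `φ : G → Y` is locally left uniformly continuous. -/
def LocallyLeftUC {G Y : Type*} [Group G] [TopologicalSpace G]
    [AddCommGroup Y] [TopologicalSpace Y] (φ : G → Y) : Prop :=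
  ∀ g₀ : G, ∃ V ∈ 𝓝 g₀, ∀ U ∈ 𝓝 (0 : Y), ∃ W ∈ 𝓝 (1 : G),
    ∀ x ∈ V, ∀ y ∈ V, x⁻¹ * y ∈ W → φ x - φ y ∈ U

/-- `φ` is of class LUC¹, with `D X g = (D_X φ)(g)`. -/
def IsLUC1 {G Y : Type*} [Group G] [TopologicalSpace G]
    [AddCommGroup Y] [Module ℝ Y] [TopologicalSpace Y]
    (φ : G → Y) (D : OneParamSubgroup G → G → Y) : Prop :=
  LocallyLeftUC φ ∧ (∀ X g, HasDirDerivAt φ X g (D X g)) ∧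
    ∀ X, LocallyLeftUC (D X)

section AuxLemmas

set_option linter.unusedSectionVars false


variable {G Y : Type*} [Group G] [TopologicalSpace G] [IsTopologicalGroup G]

lemma OneParamSubgroup.toFun_zero (X : OneParamSubgroup G) : X.toFun 0 = 1 := by
  have h := X.map_add 0 0
  rw [add_zero] at h
  exact (mul_left_cancel (a := X.toFun 0) (by rw [mul_one, ← h])).symm

variable [AddCommGroup Y] [TopologicalSpace Y] [IsTopologicalAddGroup Y]

lemma LocallyLeftUC.continuous {φ : G → Y} (h : LocallyLeftUC φ) : Continuous φ := by
  rw [continuous_iff_continuousAt]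
  intro g₀
  obtain ⟨V, hV, hP⟩ := h g₀
  rw [ContinuousAt, Filter.tendsto_def]
  intro U hU
  have hU₀ : (fun z : Y => z + φ g₀) ⁻¹' U ∈ 𝓝 (0 : Y) := by
    apply (continuous_add_right (φ g₀)).continuousAt.preimage_mem_nhds
    simpa using hU
  obtain ⟨W, hW, hWP⟩ := hP _ hU₀
  have hA : (fun x : G => x⁻¹ * g₀) ⁻¹' W ∈ 𝓝 g₀ := by
    apply ((continuous_inv.mul continuous_const).continuousAt (x := g₀)).preimage_mem_nhds
    simpa using hW
  filter_upwards [hV, hA] with x hxV hxA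
  have := hWP x hxV g₀ (mem_of_mem_nhds hV) hxA
  simpa using this

lemma LocallyLeftUC.comp_clm [Module ℝ Y] {φ : G → Y} (ℓ : Y →L[ℝ] ℝ)
    (h : LocallyLeftUC φ) : LocallyLeftUC (fun x => ℓ (φ x)) := by
  intro g₀
  obtain ⟨V, hV, hP⟩ := h g₀
  refine ⟨V, hV, fun U hU => ?_⟩
  obtain ⟨W, hW, hWP⟩ := hP (ℓ ⁻¹' U) (ℓ.continuous.continuousAt.preimage_mem_nhds (by simpa using hU))
  exact ⟨W, hW, fun x hx y hy hxy => by
    have := hWP x hx y hy hxy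
    simpa [map_sub] using this⟩

end AuxLemmas

lemma hasDerivAt_of_hasDirDeriv {G : Type*} [Group G] [TopologicalSpace G]
    (f : G → ℝ) (Z : OneParamSubgroup G) (h : G) (σ₀ : ℝ) {c : ℝ}
    (hd : HasDirDerivAt f Z (h * Z.toFun σ₀) c) :
    HasDerivAt (fun σ => f (h * Z.toFun σ)) c σ₀ := by
  rw [hasDerivAt_iff_tendsto_slope]
  have h1 : Tendsto (fun σ : ℝ => σ - σ₀) (𝓝[≠] σ₀) (𝓝[≠] (0:ℝ)) := by
    apply tendsto_nhdsWithin_of_tendsto_nhds_of_eventually_within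
    · have : Tendsto (fun σ : ℝ => σ - σ₀) (𝓝 σ₀) (𝓝 (σ₀ - σ₀)) :=
        (continuous_id.sub continuous_const).tendsto σ₀
      rw [sub_self] at this
      exact this.mono_left nhdsWithin_le_nhds
    · filter_upwards [self_mem_nhdsWithin] with σ hσ
      exact sub_ne_zero.2 hσ
  have h2 := hd.comp h1
  refine Filter.Tendsto.congr (fun σ => ?_) h2
  simp only [Function.comp_apply, slope_def_field, smul_eq_mul]
  have hZ : h * Z.toFun σ₀ * Z.toFun (σ - σ₀) = h * Z.toFun σ := by
    rw [mul_assoc, ← Z.map_add, add_sub_cancel]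
  rw [hZ, inv_mul_eq_div]

lemma lucStepA {G : Type*} [Group G] [TopologicalSpace G] [IsTopologicalGroup G]
    (f : G → ℝ) (d : OneParamSubgroup G → G → ℝ) (hf : IsLUC1 f d) (g : G)
    (Z : OneParamSubgroup G) {ε : ℝ} (hε : 0 < ε) :
    ∃ Ω ∈ 𝓝 (1:G), ∃ δ > (0:ℝ), ∀ w ∈ Ω, ∀ s : ℝ, |s| ≤ δ →
      |f (g * w * Z.toFun s) - f (g * w) - s * d Z g| ≤ ε * |s| := by
  obtain ⟨V, hV, hVP⟩ := hf.2.2 Z g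
  obtain ⟨W, hW, hWP⟩ := hVP (Metric.ball (0:ℝ) ε) (Metric.ball_mem_nhds 0 hε)
  have hcont : Continuous (fun p : G × ℝ => g * p.1 * Z.toFun p.2) :=
    (continuous_const.mul continuous_fst).mul (Z.continuous_toFun.comp continuous_snd)
  have hv1 : g * (1:G) * Z.toFun 0 = g := by rw [Z.toFun_zero, mul_one, mul_one]
  have hS1 : (fun p : G × ℝ => g * p.1 * Z.toFun p.2) ⁻¹' V ∈ 𝓝 ((1:G), (0:ℝ)) :=
    hcont.continuousAt.preimage_mem_nhds (by rw [hv1]; exact hV)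
  have hS2 : (fun p : G × ℝ => (g * p.1 * Z.toFun p.2)⁻¹ * g) ⁻¹' W ∈ 𝓝 ((1:G), (0:ℝ)) := by
    apply (hcont.inv.mul continuous_const).continuousAt.preimage_mem_nhds
    show W ∈ 𝓝 ((g * (1:G) * Z.toFun 0)⁻¹ * g)
    rw [hv1, inv_mul_cancel]
    exact hW
  obtain ⟨Ω, hΩ, T, hT, hsub⟩ := mem_nhds_prod_iff.1 (Filter.inter_mem hS1 hS2)
  obtain ⟨δ', hδ', hball⟩ := Metric.mem_nhds_iff.1 hT
  refine ⟨Ω, hΩ, δ'/2, by positivity, ?_⟩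
  intro w hw s hs
  have hmemT : ∀ σ : ℝ, |σ| ≤ δ'/2 → σ ∈ T := by
    intro σ hσ
    apply hball
    rw [Metric.mem_ball, Real.dist_eq, sub_zero]
    linarith
  have hkey : ∀ σ : ℝ, |σ| ≤ δ'/2 →
      g * w * Z.toFun σ ∈ V ∧ (g * w * Z.toFun σ)⁻¹ * g ∈ W := by
    intro σ hσ
    have := hsub (Set.mk_mem_prod hw (hmemT σ hσ))
    exact ⟨this.1, this.2⟩
  have hgV : g ∈ V := mem_of_mem_nhds hV
  have habs : ∀ σ ∈ Set.uIcc (0:ℝ) s, |σ| ≤ δ'/2 := by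
    intro σ hσ
    rcases Set.mem_uIcc.1 hσ with ⟨h0, h1⟩ | ⟨h0, h1⟩
    · rw [abs_of_nonneg h0]
      exact le_trans h1 (le_trans (le_abs_self s) hs)
    · rw [abs_of_nonpos h1]
      have : -s ≤ |s| := neg_le_abs s
      linarith
  have hderiv : ∀ σ ∈ Set.uIcc (0:ℝ) s,
      HasDerivWithinAt (fun σ => f (g * w * Z.toFun σ) - σ * d Z g)
        (d Z (g * w * Z.toFun σ) - d Z g) (Set.uIcc (0:ℝ) s) σ := by
    intro σ _
    have h1 : HasDerivAt (fun τ => f (g * w * Z.toFun τ)) (d Z (g * w * Z.toFun σ)) σ :=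
      hasDerivAt_of_hasDirDeriv f Z (g * w) σ (hf.2.1 Z _)
    have h2 : HasDerivAt (fun τ : ℝ => τ * d Z g) (d Z g) σ := by
      simpa using (hasDerivAt_id σ).mul_const (d Z g)
    exact (h1.sub h2).hasDerivWithinAt
  have hbound : ∀ σ ∈ Set.uIcc (0:ℝ) s, ‖d Z (g * w * Z.toFun σ) - d Z g‖ ≤ ε := by
    intro σ hσ
    obtain ⟨hxV, hxW⟩ := hkey σ (habs σ hσ)
    have := hWP _ hxV g hgV hxW
    exact le_of_lt (mem_ball_zero_iff.1 this)
  have hmv := Convex.norm_image_sub_le_of_norm_hasDerivWithin_le hderiv hbound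
    (convex_uIcc (0:ℝ) s) Set.left_mem_uIcc Set.right_mem_uIcc
  simp only [Real.norm_eq_abs, Z.toFun_zero, mul_one, zero_mul, sub_zero] at hmv
  calc |f (g * w * Z.toFun s) - f (g * w) - s * d Z g|
      = |f (g * w * Z.toFun s) - s * d Z g - f (g * w)| := by ring_nf
    _ ≤ ε * |s| := hmv

lemma scalar_trotter {G : Type*} [Group G] [TopologicalSpace G] [IsTopologicalGroup G]
    (f : G → ℝ) (d : OneParamSubgroup G → G → ℝ) (hf : IsLUC1 f d)
    (X X₁ X₂ : OneParamSubgroup G) (hX : TrotterSum X X₁ X₂) (g : G) :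
    d X g = d X₁ g + d X₂ g := by
  have key : ∀ ε : ℝ, 0 < ε → ∃ t₀ > (0:ℝ), ∀ t : ℝ, t ≠ 0 → |t| ≤ t₀ →
      |f (g * X.toFun t) - f g - t * (d X₁ g + d X₂ g)| ≤ 2 * ε * |t| := by
    intro ε hε
    obtain ⟨Ω₁, hΩ₁, δ₁, hδ₁, hA₁⟩ := lucStepA f d hf g X₁ hε
    obtain ⟨Ω₂, hΩ₂, δ₂, hδ₂, hA₂⟩ := lucStepA f d hf g X₂ hε
    obtain ⟨Ωa, hΩa, hΩa3⟩ : ∃ Ωa ∈ 𝓝 (1:G), ∀ a ∈ Ωa, ∀ b ∈ Ωa, ∀ c ∈ Ωa,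
        a * b * c ∈ Ω₁ ∩ Ω₂ := by
      obtain ⟨V1, hV1, hV1P⟩ := exists_nhds_one_split (Filter.inter_mem hΩ₁ hΩ₂)
      obtain ⟨V2, hV2, hV2P⟩ := exists_nhds_one_split hV1
      refine ⟨V1 ∩ V2, Filter.inter_mem hV1 hV2, fun a ha b hb c hc => ?_⟩
      exact hV1P _ (hV2P a ha.2 b hb.2) c hc.1
    have h1 : X.toFun ⁻¹' Ωa ∈ 𝓝 (0:ℝ) :=
      X.continuous_toFun.continuousAt.preimage_mem_nhds (by rw [X.toFun_zero]; exact hΩa)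
    have h2 : X₁.toFun ⁻¹' Ωa ∈ 𝓝 (0:ℝ) :=
      X₁.continuous_toFun.continuousAt.preimage_mem_nhds (by rw [X₁.toFun_zero]; exact hΩa)
    obtain ⟨r, hr, hrsub⟩ := Metric.mem_nhds_iff.1 (Filter.inter_mem h1 h2)
    set t₀ := min (r/2) (min δ₁ δ₂) with ht₀def
    have ht₀pos : 0 < t₀ := lt_min (by positivity) (lt_min hδ₁ hδ₂)
    refine ⟨t₀, ht₀pos, ?_⟩
    intro t ht htle
    have hballmem : ∀ τ : ℝ, |τ| ≤ t₀ → X.toFun τ ∈ Ωa ∧ X₁.toFun τ ∈ Ωa := by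
      intro τ hτ
      have hmem : τ ∈ Metric.ball (0:ℝ) r := by
        rw [Metric.mem_ball, Real.dist_eq, sub_zero]
        have : t₀ ≤ r/2 := min_le_left _ _
        linarith
      exact ⟨(hrsub hmem).1, (hrsub hmem).2⟩
    obtain ⟨N₁, hN₁⟩ := hX (Set.uIcc 0 t) isCompact_uIcc Ωa hΩa
    have hsmall : ∀ᶠ u in 𝓝 (0:ℝ), ∀ k ∈ Finset.range N₁,
        (X₁.toFun u * X₂.toFun u) ^ k ∈ Ωa := by
      rw [Finset.eventually_all]
      intro k _
      have hc : ContinuousAt (fun u : ℝ => (X₁.toFun u * X₂.toFun u) ^ k) 0 :=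
        ((X₁.continuous_toFun.mul X₂.continuous_toFun).pow k).continuousAt
      have hmem := hc.preimage_mem_nhds
        (show Ωa ∈ 𝓝 ((X₁.toFun 0 * X₂.toFun 0) ^ k) by
          rw [X₁.toFun_zero, X₂.toFun_zero, one_mul, one_pow]; exact hΩa)
      exact eventually_of_mem hmem fun x hx => hx
    obtain ⟨δ₃, hδ₃, hδ₃P⟩ := Metric.eventually_nhds_iff.1 hsmall
    set N : ℕ := max (max N₁ 1) (⌈|t| / δ₃⌉₊ + 1) with hNdef
    have main : ∀ n : ℕ, N ≤ n →
        |f (g * (X₁.toFun (t/(n:ℝ)) * X₂.toFun (t/(n:ℝ)))^n) - f g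
          - t * (d X₁ g + d X₂ g)| ≤ 2*ε*|t| := by
      intro n hn
      have hn1 : 1 ≤ n := le_trans (le_trans (le_max_right N₁ 1) (le_max_left _ _)) hn
      have hnN₁ : N₁ ≤ n := le_trans (le_trans (le_max_left N₁ 1) (le_max_left _ _)) hn
      have hnpos : (0:ℝ) < n := by exact_mod_cast hn1
      set s := t / (n:ℝ) with hs
      have hsabs : |s| ≤ |t| := by
        rw [hs, abs_div, abs_of_pos hnpos]
        exact div_le_self (abs_nonneg t) (by exact_mod_cast hn1)
      have hst₀ : |s| ≤ t₀ := le_trans hsabs htle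
      have hsδ₃ : |s| < δ₃ := by
        have hcast : (⌈|t|/δ₃⌉₊:ℝ) + 1 ≤ (n:ℝ) := by
          exact_mod_cast le_trans (le_max_right (max N₁ 1) _) hn
        have h' : |t|/δ₃ < (n:ℝ) := lt_of_le_of_lt (Nat.le_ceil _) (by linarith)
        rw [hs, abs_div, abs_of_pos hnpos, div_lt_iff₀ hnpos]
        have := (div_lt_iff₀ hδ₃).1 h'
        linarith [this, mul_comm (n:ℝ) δ₃]
      set P : G := X₁.toFun s * X₂.toFun s with hP
      have hdecomp : ∀ k : ℕ, k ≤ n → ∃ a ∈ Ωa, ∃ b ∈ Ωa, P ^ k = a * b := by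
        intro k hk
        by_cases hkN : k < N₁
        · refine ⟨1, mem_of_mem_nhds hΩa, P^k, ?_, (one_mul _).symm⟩
          exact hδ₃P (show dist s 0 < δ₃ by rwa [Real.dist_eq, sub_zero]) k
            (Finset.mem_range.2 hkN)
        · push_neg at hkN
          by_cases hk0 : k = 0
          · exact ⟨1, mem_of_mem_nhds hΩa, 1, mem_of_mem_nhds hΩa,
              by rw [hk0, pow_zero, one_mul]⟩
          · have hkpos : (0:ℝ) < k := by
              exact_mod_cast Nat.pos_of_ne_zero hk0
            have hkn : (k:ℝ) ≤ (n:ℝ) := by exact_mod_cast hk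
            set τ := t * k / n with hτ
            have hτabs : |τ| ≤ |t| := by
              rw [hτ, abs_div, abs_mul, abs_of_pos hnpos, abs_of_pos hkpos]
              rw [div_le_iff₀ hnpos]
              nlinarith [abs_nonneg t]
            have hτK : τ ∈ Set.uIcc 0 t := by
              rw [Set.mem_uIcc]
              rcases le_or_gt 0 t with h0 | h0
              · left
                constructor
                · positivity
                · rw [hτ, div_le_iff₀ hnpos]; nlinarith
              · right
                constructor
                · rw [hτ, le_div_iff₀ hnpos]; nlinarith
                · rw [hτ]
                  apply div_nonpos_of_nonpos_of_nonneg _ (le_of_lt hnpos)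
                  nlinarith
            have htr := hN₁ k hkN τ hτK
            have hτk : τ / (k:ℝ) = s := by
              rw [hτ, hs]
              field_simp
            rw [hτk] at htr
            exact ⟨X.toFun τ, (hballmem τ (le_trans hτabs htle)).1, _, htr,
              (mul_inv_cancel_left _ _).symm⟩
      have hterm : ∀ k : ℕ, k < n →
          |f (g * P^(k+1)) - f (g * P^k) - s * (d X₁ g + d X₂ g)| ≤ 2 * (ε * |s|) := by
        intro k hk
        obtain ⟨a, ha, b, hb, hab⟩ := hdecomp k (le_of_lt hk)
        have hPk : P^k ∈ Ω₁ ∩ Ω₂ := by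
          have h := hΩa3 a ha b hb 1 (mem_of_mem_nhds hΩa)
          rwa [mul_one, ← hab] at h
        have hPk' : P^k * X₁.toFun s ∈ Ω₁ ∩ Ω₂ := by
          have h := hΩa3 a ha b hb _ (hballmem s hst₀).2
          rwa [← hab] at h
        have ht₀δ₁ : t₀ ≤ δ₁ := le_trans (min_le_right _ _) (min_le_left _ _)
        have ht₀δ₂ : t₀ ≤ δ₂ := le_trans (min_le_right _ _) (min_le_right _ _)
        have e1 := hA₁ (P^k) hPk.1 s (le_trans hst₀ ht₀δ₁)
        have e2 := hA₂ (P^k * X₁.toFun s) hPk'.2 s (le_trans hst₀ ht₀δ₂)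
        have heq : g * (P^k * X₁.toFun s) * X₂.toFun s = g * P^(k+1) := by
          rw [pow_succ]
          simp only [mul_assoc]
          rw [← hP]
        have heq2 : g * (P^k * X₁.toFun s) = g * P^k * X₁.toFun s := (mul_assoc _ _ _).symm
        rw [heq, heq2] at e2
        have habs := abs_add_le (f (g * P^(k+1)) - f (g * P^k * X₁.toFun s) - s * d X₂ g)
          (f (g * P^k * X₁.toFun s) - f (g * P^k) - s * d X₁ g)
        calc |f (g * P^(k+1)) - f (g * P^k) - s * (d X₁ g + d X₂ g)|
            = |(f (g * P^(k+1)) - f (g * P^k * X₁.toFun s) - s * d X₂ g)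
              + (f (g * P^k * X₁.toFun s) - f (g * P^k) - s * d X₁ g)| := by ring_nf
          _ ≤ |f (g * P^(k+1)) - f (g * P^k * X₁.toFun s) - s * d X₂ g|
              + |f (g * P^k * X₁.toFun s) - f (g * P^k) - s * d X₁ g| := habs
          _ ≤ ε * |s| + ε * |s| := add_le_add e2 e1
          _ = 2 * (ε * |s|) := by ring
      have hns : (n:ℝ) * s = t := by
        rw [hs]
        field_simp
      have hsum : f (g * P^n) - f g - t * (d X₁ g + d X₂ g)
          = ∑ k ∈ Finset.range n,
              (f (g * P^(k+1)) - f (g * P^k) - s * (d X₁ g + d X₂ g)) := by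
        rw [Finset.sum_sub_distrib, Finset.sum_range_sub (fun k => f (g * P^k)),
          Finset.sum_const, Finset.card_range, pow_zero, mul_one, nsmul_eq_mul]
        rw [← mul_assoc, hns]
      have hfinal : |f (g * P^n) - f g - t * (d X₁ g + d X₂ g)| ≤ 2*ε*|t| := by
        rw [hsum]
        calc |∑ k ∈ Finset.range n,
                (f (g * P^(k+1)) - f (g * P^k) - s * (d X₁ g + d X₂ g))|
            ≤ ∑ k ∈ Finset.range n,
                |f (g * P^(k+1)) - f (g * P^k) - s * (d X₁ g + d X₂ g)| :=
              Finset.abs_sum_le_sum_abs _ _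
          _ ≤ ∑ _k ∈ Finset.range n, 2 * (ε * |s|) :=
              Finset.sum_le_sum fun k hk => hterm k (Finset.mem_range.1 hk)
          _ = n * (2 * (ε * |s|)) := by
              rw [Finset.sum_const, Finset.card_range, nsmul_eq_mul]
          _ = 2*ε*((n:ℝ) * |s|) := by ring
          _ = 2*ε*|t| := by
              rw [← hns, abs_mul, abs_of_pos hnpos]
      exact hfinal
    -- limit n → ∞
    have hPtend : Tendsto
        (fun n : ℕ => g * (X₁.toFun (t/(n:ℝ)) * X₂.toFun (t/(n:ℝ)))^n)
        atTop (𝓝 (g * X.toFun t)) := by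
      have h1 : Tendsto
          (fun n : ℕ => (X.toFun t)⁻¹ * (X₁.toFun (t/(n:ℝ)) * X₂.toFun (t/(n:ℝ)))^n)
          atTop (𝓝 (1:G)) := by
        rw [tendsto_atTop']
        intro W hW
        obtain ⟨N', hN'⟩ := hX {t} isCompact_singleton W hW
        exact ⟨N', fun n hn => hN' n hn t rfl⟩
      have h2 : Tendsto
          (fun n : ℕ => (g * X.toFun t) *
            ((X.toFun t)⁻¹ * (X₁.toFun (t/(n:ℝ)) * X₂.toFun (t/(n:ℝ)))^n))
          atTop (𝓝 ((g * X.toFun t) * 1)) := tendsto_const_nhds.mul h1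
      rw [mul_one] at h2
      refine h2.congr fun n => ?_
      rw [mul_assoc, mul_inv_cancel_left]
    have hftend : Tendsto
        (fun n : ℕ => f (g * (X₁.toFun (t/(n:ℝ)) * X₂.toFun (t/(n:ℝ)))^n))
        atTop (𝓝 (f (g * X.toFun t))) :=
      (hf.1.continuous.tendsto _).comp hPtend
    have habs_t : Tendsto
        (fun n : ℕ => |f (g * (X₁.toFun (t/(n:ℝ)) * X₂.toFun (t/(n:ℝ)))^n) - f g
          - t * (d X₁ g + d X₂ g)|)
        atTop (𝓝 |f (g * X.toFun t) - f g - t * (d X₁ g + d X₂ g)|) :=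
      ((hftend.sub tendsto_const_nhds).sub tendsto_const_nhds).abs
    exact le_of_tendsto habs_t (eventually_atTop.2 ⟨N, main⟩)
  have H : HasDirDerivAt f X g (d X₁ g + d X₂ g) := by
    rw [HasDirDerivAt, Metric.tendsto_nhds]
    intro ε hε
    obtain ⟨t₀, ht₀, hkey⟩ := key (ε/8) (by positivity)
    have h1 : ∀ᶠ u in 𝓝 (0:ℝ), |u| ≤ t₀ := by
      have hmem := Metric.closedBall_mem_nhds (0:ℝ) ht₀
      exact eventually_of_mem hmem fun x hx => by
        simpa [Real.dist_eq] using Metric.mem_closedBall.1 hx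
    filter_upwards [eventually_nhdsWithin_of_eventually_nhds h1, self_mem_nhdsWithin]
      with t htle htne
    have hb := hkey t htne htle
    rw [Real.dist_eq]
    have htpos : 0 < |t| := abs_pos.2 htne
    have heq : t⁻¹ • (f (g * X.toFun t) - f g) - (d X₁ g + d X₂ g)
        = t⁻¹ * (f (g * X.toFun t) - f g - t * (d X₁ g + d X₂ g)) := by
      have ht0 : t ≠ 0 := htne
      rw [smul_eq_mul, mul_sub t⁻¹ _ (t * _), ← mul_assoc, inv_mul_cancel₀ ht0, one_mul]
    have hle : |t⁻¹ • (f (g * X.toFun t) - f g) - (d X₁ g + d X₂ g)| ≤ ε/4 := by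
      rw [heq, abs_mul, abs_inv]
      calc |t|⁻¹ * |f (g * X.toFun t) - f g - t * (d X₁ g + d X₂ g)|
          ≤ |t|⁻¹ * (2 * (ε/8) * |t|) := by
            apply mul_le_mul_of_nonneg_left hb (inv_nonneg.2 (abs_nonneg t))
        _ = ε/4 := by field_simp; ring
    linarith
  exact tendsto_nhds_unique (hf.2.1 X g) H

theorem dirDeriv_add_of_trotterSum
    {G Y : Type*} [Group G] [TopologicalSpace G] [IsTopologicalGroup G]
    [AddCommGroup Y] [Module ℝ Y] [TopologicalSpace Y] [IsTopologicalAddGroup Y]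
    [ContinuousSMul ℝ Y] [LocallyConvexSpace ℝ Y] [T2Space Y]
    (φ : G → Y) (D : OneParamSubgroup G → G → Y) (hφ : IsLUC1 φ D)
    (X X₁ X₂ : OneParamSubgroup G) (hX : TrotterSum X X₁ X₂) (g : G) :
    D X g = D X₁ g + D X₂ g := by
  by_contra hne
  obtain ⟨ℓ, hℓ⟩ := SeparatingDual.exists_separating_of_ne (R := ℝ) hne
  apply hℓ
  have hf : IsLUC1 (fun x => ℓ (φ x)) (fun Z h => ℓ (D Z h)) := by
    refine ⟨hφ.1.comp_clm ℓ, ?_, fun Z => (hφ.2.2 Z).comp_clm ℓ⟩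
    intro Z h
    have htd := (ℓ.continuous.tendsto _).comp (hφ.2.1 Z h)
    refine htd.congr fun t => ?_
    simp [Function.comp, map_sub, map_smul]
  have hkey := scalar_trotter _ _ hf X X₁ X₂ hX g
  rw [map_add]
  exact hkey
end

section
/- Let G be a topological group, Y a Hausdorff locally convex real topological vector space, φ : G → Y a function of class LUC¹, and X₁, X₂ one-parameter subgroups of G. Then for every g₀ ∈ G there is a neighborhood V₀ of g₀ such that for every neighborhood U of 0 in Y there exists δ > 0 with: for all g ∈ V₀ and all t with 0 < |t| < δ, the remainder φ(g·X₁(t)·X₂(t)) − φ(g) − t • ((D_{X₁}φ)(g) + (D_{X₂}φ)(g)) belongs to t • U. -/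
open Filter Topology Pointwise

/-- auxiliary -/
lemma OneParamSubgroup.map_zero {G : Type*} [Group G] [TopologicalSpace G]
    (X : OneParamSubgroup G) : X.toFun 0 = 1 := by
  have h := X.map_add 0 0
  rw [add_zero] at h
  exact (left_eq_mul.1 h)


lemma abs_le_abs_of_mem_uIcc_zero {s t : ℝ} (hs : s ∈ Set.uIcc 0 t) : |s| ≤ |t| := by
  rcases le_total 0 t with h | h
  · rw [Set.uIcc_of_le h] at hs
    rw [abs_of_nonneg hs.1, abs_of_nonneg h]; exact hs.2
  · rw [Set.uIcc_of_ge h] at hs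
    rw [abs_of_nonpos hs.2, abs_of_nonpos h]; linarith [hs.1]


lemma aux_hasDerivAt {G Y : Type*} [Group G] [TopologicalSpace G]
    [AddCommGroup Y] [Module ℝ Y] [TopologicalSpace Y]
    (φ : G → Y) (DX : G → Y) (X : OneParamSubgroup G)
    (hD : ∀ g, HasDirDerivAt φ X g (DX g)) (f : Y →L[ℝ] ℝ) (a : G) (s : ℝ) :
    HasDerivAt (fun u : ℝ => f (φ (a * X.toFun u))) (f (DX (a * X.toFun s))) s := by
  rw [hasDerivAt_iff_tendsto_slope]
  have h1 : Tendsto (fun w : ℝ => f (w⁻¹ • (φ (a * X.toFun s * X.toFun w) - φ (a * X.toFun s))))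
      (𝓝[≠] (0:ℝ)) (𝓝 (f (DX (a * X.toFun s)))) :=
    (f.continuous.tendsto _).comp (hD (a * X.toFun s))
  have hmap : Tendsto (fun u : ℝ => u - s) (𝓝[≠] s) (𝓝[≠] (0:ℝ)) := by
    refine tendsto_nhdsWithin_of_tendsto_nhds_of_eventually_within _ ?_ ?_
    · have : Tendsto (fun u : ℝ => u - s) (𝓝 s) (𝓝 0) := by
        simpa using (continuous_sub_right s).tendsto s
      exact this.mono_left nhdsWithin_le_nhds
    · filter_upwards [self_mem_nhdsWithin] with u hu
      exact sub_ne_zero.2 hu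
  have h2 := h1.comp hmap
  refine h2.congr fun u => ?_
  show f ((u - s)⁻¹ • (φ (a * X.toFun s * X.toFun (u - s)) - φ (a * X.toFun s))) = _
  have hx : a * X.toFun s * X.toFun (u - s) = a * X.toFun u := by
    rw [mul_assoc, ← X.map_add]
    norm_num
  rw [hx, slope_def_field]
  rw [map_smul, map_sub]
  simp [smul_eq_mul, div_eq_inv_mul]


lemma aux_mvt {G Y : Type*} [Group G] [TopologicalSpace G]
    [AddCommGroup Y] [Module ℝ Y] [TopologicalSpace Y] [IsTopologicalAddGroup Y]
    [ContinuousSMul ℝ Y] [LocallyConvexSpace ℝ Y]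
    (φ : G → Y) (DX : G → Y) (X : OneParamSubgroup G)
    (hD : ∀ g, HasDirDerivAt φ X g (DX g)) (a : G) (w : Y) {t : ℝ} (ht : t ≠ 0)
    {C : Set Y} (hCc : Convex ℝ C) (hCcl : IsClosed C)
    (hmem : ∀ s ∈ Set.uIcc (0:ℝ) t, DX (a * X.toFun s) - w ∈ C) :
    φ (a * X.toFun t) - φ a - t • w ∈ t • C := by
  set z := t⁻¹ • (φ (a * X.toFun t) - φ a - t • w) with hzdef
  suffices hz : z ∈ C by
    exact ⟨z, hz, by show t • z = _; rw [hzdef, smul_inv_smul₀ ht]⟩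
  by_contra hz
  obtain ⟨f, u, hfC, hfz⟩ := geometric_hahn_banach_closed_point hCc hCcl hz
  set h : ℝ → ℝ := fun s => f (φ (a * X.toFun s)) with hhdef
  have hder : ∀ s : ℝ, HasDerivAt h (f (DX (a * X.toFun s))) s :=
    fun s => aux_hasDerivAt φ DX X hD f a s
  have hcont : ∀ s : Set ℝ, ContinuousOn h s :=
    fun s x _ => ((hder x).continuousAt).continuousWithinAt
  have h0 : h 0 = f (φ a) := by rw [hhdef]; simp [X.map_zero]
  have hfz' : f z = (h t - h 0) / t - f w := by
    rw [hzdef, map_smul, map_sub, map_sub, map_smul, h0]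
    field_simp [hhdef]
    simp only [hhdef, smul_eq_mul]
    field_simp
  have key : ∃ c ∈ Set.uIcc (0:ℝ) t, f (DX (a * X.toFun c)) = (h t - h 0) / t := by
    rcases ht.lt_or_gt with hneg | hpos
    · obtain ⟨c, hc, hceq⟩ := exists_hasDerivAt_eq_slope h
        (fun s => f (DX (a * X.toFun s))) hneg (hcont _) (fun x _ => hder x)
      refine ⟨c, ?_, ?_⟩
      · rw [Set.uIcc_of_ge hneg.le]; exact ⟨hc.1.le, hc.2.le⟩
      · rw [hceq, h0]
        rw [div_eq_div_iff (by linarith) ht]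
        ring
    · obtain ⟨c, hc, hceq⟩ := exists_hasDerivAt_eq_slope h
        (fun s => f (DX (a * X.toFun s))) hpos (hcont _) (fun x _ => hder x)
      refine ⟨c, ?_, ?_⟩
      · rw [Set.uIcc_of_le hpos.le]; exact ⟨hc.1.le, hc.2.le⟩
      · rw [hceq]; rw [sub_zero]
  obtain ⟨c, hcmem, hceq⟩ := key
  have : f z = f (DX (a * X.toFun c) - w) := by
    rw [hfz', ← hceq, map_sub]
  have hlt := hfC _ (hmem c hcmem)
  rw [← this] at hlt
  linarith


theorem first_order_expansion_product
    {G Y : Type*} [Group G] [TopologicalSpace G] [IsTopologicalGroup G]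
    [AddCommGroup Y] [Module ℝ Y] [TopologicalSpace Y] [IsTopologicalAddGroup Y]
    [ContinuousSMul ℝ Y] [LocallyConvexSpace ℝ Y] [T2Space Y]
    (φ : G → Y) (D : OneParamSubgroup G → G → Y) (hφ : IsLUC1 φ D)
    (X₁ X₂ : OneParamSubgroup G) :
    ∀ g₀ : G, ∃ V₀ ∈ 𝓝 g₀, ∀ U ∈ 𝓝 (0 : Y), ∃ δ > (0 : ℝ),
      ∀ g ∈ V₀, ∀ t : ℝ, 0 < |t| → |t| < δ →
        φ (g * X₁.toFun t * X₂.toFun t) - φ g - t • (D X₁ g + D X₂ g) ∈ t • U := by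
  obtain ⟨hLUC, hDeriv, hDLUC⟩ := hφ
  intro g₀
  obtain ⟨V₁, hV₁, hV₁p⟩ := hDLUC X₁ g₀
  obtain ⟨V₂, hV₂, hV₂p⟩ := hDLUC X₂ g₀
  have hmul : Tendsto (fun p : G × G => p.1 * p.2) (𝓝 g₀ ×ˢ 𝓝 (1:G)) (𝓝 g₀) := by
    have := continuous_mul.tendsto ((g₀, (1:G)) : G × G)
    rw [nhds_prod_eq] at this
    simpa using this
  obtain ⟨V₀, hV₀, W₀, hW₀, hsub⟩ := mem_prod_iff.1 (hmul (inter_mem hV₁ hV₂))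
  refine ⟨V₀, hV₀, ?_⟩
  intro U hU
  -- build the closed convex set C
  obtain ⟨U₁, hU₁, hU₁half⟩ := exists_nhds_zero_half hU
  obtain ⟨U₂, hU₂, hU₂closed, hU₂sub⟩ := exists_mem_nhds_isClosed_subset hU₁
  obtain ⟨U₃, ⟨hU₃, hU₃conv⟩, hU₃sub⟩ :=
    (LocallyConvexSpace.convex_basis_zero ℝ Y).mem_iff.1 hU₂
  set C := closure U₃ with hCdef
  have hCconv : Convex ℝ C := hU₃conv.closure
  have hCcl : IsClosed C := isClosed_closure
  have hCsub : C ⊆ U₁ := (hU₂closed.closure_subset_iff.2 hU₃sub).trans hU₂sub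
  have hU₃C : U₃ ⊆ C := subset_closure
  -- get W's from LUC of the derivatives
  obtain ⟨W₁, hW₁, hW₁p⟩ := hV₁p U₃ hU₃
  obtain ⟨W₂, hW₂, hW₂p⟩ := hV₂p U₃ hU₃
  -- find δ
  have hA : {s : ℝ | X₁.toFun s ∈ W₀ ∧ (X₁.toFun s)⁻¹ ∈ W₁} ∈ 𝓝 (0:ℝ) := by
    have h1 : ContinuousAt X₁.toFun 0 := X₁.continuous_toFun.continuousAt
    have h2 : ContinuousAt (fun s => (X₁.toFun s)⁻¹) 0 :=
      (continuous_inv.comp X₁.continuous_toFun).continuousAt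
    have := inter_mem (h1.preimage_mem_nhds (by rw [X₁.map_zero]; exact hW₀))
      (h2.preimage_mem_nhds (by rw [X₁.map_zero, inv_one]; exact hW₁))
    exact this
  have hB : {p : ℝ × ℝ | X₁.toFun p.1 * X₂.toFun p.2 ∈ W₀ ∧
      (X₁.toFun p.1 * X₂.toFun p.2)⁻¹ ∈ W₂} ∈ 𝓝 ((0:ℝ), (0:ℝ)) := by
    have hc : Continuous (fun p : ℝ × ℝ => X₁.toFun p.1 * X₂.toFun p.2) :=
      (X₁.continuous_toFun.comp continuous_fst).mul (X₂.continuous_toFun.comp continuous_snd)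
    have h1 : ContinuousAt (fun p : ℝ × ℝ => X₁.toFun p.1 * X₂.toFun p.2) (0,0) :=
      hc.continuousAt
    have h2 : ContinuousAt (fun p : ℝ × ℝ => (X₁.toFun p.1 * X₂.toFun p.2)⁻¹) (0,0) :=
      (continuous_inv.comp hc).continuousAt
    exact inter_mem
      (h1.preimage_mem_nhds (by simpa [X₁.map_zero, X₂.map_zero] using hW₀))
      (h2.preimage_mem_nhds (by simpa [X₁.map_zero, X₂.map_zero] using hW₂))
  rw [nhds_prod_eq] at hB
  obtain ⟨B₁, hB₁, B₂, hB₂, hBsub⟩ := mem_prod_iff.1 hB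
  obtain ⟨δ, hδpos, hδsub⟩ := Metric.mem_nhds_iff.1 (inter_mem hA (inter_mem hB₁ hB₂))
  refine ⟨δ, hδpos, ?_⟩
  intro g hg t ht0 htδ
  have htne : t ≠ 0 := abs_pos.1 ht0
  have hball : ∀ s : ℝ, |s| < δ → s ∈ {s : ℝ | X₁.toFun s ∈ W₀ ∧ (X₁.toFun s)⁻¹ ∈ W₁}
      ∩ (B₁ ∩ B₂) := fun s hs => hδsub (by simpa [Real.norm_eq_abs] using hs)
  have hgV : g ∈ V₁ ∩ V₂ := by
    have := hsub (Set.mk_mem_prod hg (mem_of_mem_nhds hW₀))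
    simpa using this
  -- part B : the X₁ increment
  have hBpart : φ (g * X₁.toFun t) - φ g - t • D X₁ g ∈ t • C := by
    refine aux_mvt φ (D X₁) X₁ (hDeriv X₁) g (D X₁ g) htne hCconv hCcl ?_
    intro s hs
    have hsδ : |s| < δ := lt_of_le_of_lt (abs_le_abs_of_mem_uIcc_zero hs) htδ
    have hsmem := hball s hsδ
    have hx : g * X₁.toFun s ∈ V₁ := by
      have := hsub (Set.mk_mem_prod hg hsmem.1.1)
      exact this.1
    refine hU₃C (hW₁p _ hx _ hgV.1 ?_)
    have heq : (g * X₁.toFun s)⁻¹ * g = (X₁.toFun s)⁻¹ := by group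
    rw [heq]
    exact hsmem.1.2
  -- part A : the X₂ increment based at g * X₁ t
  have htδ' : t ∈ B₁ := (hball t htδ).2.1
  have hApart : φ (g * X₁.toFun t * X₂.toFun t) - φ (g * X₁.toFun t) - t • D X₂ g ∈ t • C := by
    refine aux_mvt φ (D X₂) X₂ (hDeriv X₂) (g * X₁.toFun t) (D X₂ g) htne hCconv hCcl ?_
    intro s hs
    have hsδ : |s| < δ := lt_of_le_of_lt (abs_le_abs_of_mem_uIcc_zero hs) htδ
    have hsB₂ : s ∈ B₂ := (hball s hsδ).2.2
    have hpmem := hBsub (Set.mk_mem_prod htδ' hsB₂)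
    have hx : g * X₁.toFun t * X₂.toFun s ∈ V₂ := by
      have h' := (hsub (Set.mk_mem_prod hg hpmem.1)).2
      simpa [mul_assoc] using h'
    refine hU₃C (hW₂p _ hx _ hgV.2 ?_)
    have heq : (g * X₁.toFun t * X₂.toFun s)⁻¹ * g = (X₁.toFun t * X₂.toFun s)⁻¹ := by group
    rw [heq]
    exact hpmem.2
  -- combine
  obtain ⟨av, hav, haveq⟩ := hApart
  obtain ⟨bv, hbv, hbveq⟩ := hBpart
  refine ⟨av + bv, hU₁half _ (hCsub hav) _ (hCsub hbv), ?_⟩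
  have haveq' : t • av = φ (g * X₁.toFun t * X₂.toFun t) - φ (g * X₁.toFun t) - t • D X₂ g := haveq
  have hbveq' : t • bv = φ (g * X₁.toFun t) - φ g - t • D X₁ g := hbveq
  show t • (av + bv) = _
  rw [smul_add, haveq', hbveq', smul_add]
  abel
end

section
/- Let G be a topological group, V a real vector space, and ι a map assigning to each v ∈ V a one-parameter subgroup ι(v) of G, such that ι(c·v)(s) = ι(v)(c·s) for all c, s ∈ ℝ and v ∈ V, and such that ι(v + w) = ι(v) + ι(w) in the Trotter sense for all v, w ∈ V. Then for every Hausdorff locally convex real topological vector space Y, every function φ : G → Y of class LUC¹, and every g ∈ G, the map V → Y, v ↦ (D_{ι(v)} φ)(g), is ℝ-linear. -/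
open Filter Topology Pointwise

lemma dirDeriv_unique {G Y : Type*} [Group G] [TopologicalSpace G]
    [AddCommGroup Y] [Module ℝ Y] [TopologicalSpace Y] [T2Space Y]
    {φ : G → Y} {X : OneParamSubgroup G} {g : G} {z z' : Y}
    (h : HasDirDerivAt φ X g z) (h' : HasDirDerivAt φ X g z') : z = z' :=
  tendsto_nhds_unique h h'

/-- The scalar function `τ ↦ f (φ (h ⬝ X τ))` is differentiable with the obvious derivative. -/
lemma psi_hasDerivAt {G Y : Type*} [Group G] [TopologicalSpace G]
    [AddCommGroup Y] [Module ℝ Y] [TopologicalSpace Y] [IsTopologicalAddGroup Y]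
    [ContinuousSMul ℝ Y]
    (φ : G → Y) (X : OneParamSubgroup G) (Dx : G → Y)
    (hD : ∀ g, HasDirDerivAt φ X g (Dx g))
    (f : Y →L[ℝ] ℝ) (h : G) (τ : ℝ) :
    HasDerivAt (fun r : ℝ => f (φ (h * X.toFun r))) (f (Dx (h * X.toFun τ))) τ := by
  rw [hasDerivAt_iff_tendsto_slope]
  have key : Tendsto (fun u : ℝ => u⁻¹ • (φ ((h * X.toFun τ) * X.toFun u) - φ (h * X.toFun τ)))
      (𝓝[≠] 0) (𝓝 (Dx (h * X.toFun τ))) := hD _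
  have key2 : Tendsto (fun u : ℝ => f (u⁻¹ • (φ ((h * X.toFun τ) * X.toFun u) - φ (h * X.toFun τ))))
      (𝓝[≠] 0) (𝓝 (f (Dx (h * X.toFun τ)))) := (f.continuous.tendsto _).comp key
  have hm : Tendsto (fun y : ℝ => y - τ) (𝓝[≠] τ) (𝓝[≠] 0) := by
    apply tendsto_nhdsWithin_of_tendsto_nhds_of_eventually_within
    · have : Tendsto (fun y : ℝ => y - τ) (𝓝 τ) (𝓝 (τ - τ)) :=
        (continuous_id.sub continuous_const).tendsto τ
      simpa using this.mono_left nhdsWithin_le_nhds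
    · filter_upwards [self_mem_nhdsWithin] with y hy
      simpa [sub_eq_zero] using hy
  have := key2.comp hm
  refine this.congr (fun y => ?_)
  simp only [Function.comp_apply, slope_def_field]
  have hx : X.toFun τ * X.toFun (y - τ) = X.toFun y := by
    rw [← X.map_add, add_sub_cancel]
  rw [mul_assoc, hx, div_eq_inv_mul, map_smul, map_sub]
  rfl

/-- Mean-value estimate for an increment along a one-parameter subgroup. -/
lemma increment_mem {G Y : Type*} [Group G] [TopologicalSpace G]
    [AddCommGroup Y] [Module ℝ Y] [TopologicalSpace Y] [IsTopologicalAddGroup Y]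
    [ContinuousSMul ℝ Y] [LocallyConvexSpace ℝ Y]
    (φ : G → Y) (X : OneParamSubgroup G) (Dx : G → Y)
    (hD : ∀ g, HasDirDerivAt φ X g (Dx g))
    {U : Set Y} (hU : Convex ℝ U) (hU0 : (0:Y) ∈ U) {z : Y}
    (h : G) (s : ℝ)
    (hmem : ∀ τ ∈ Set.uIcc (0:ℝ) s, Dx (h * X.toFun τ) - z ∈ U) :
    φ (h * X.toFun s) - φ h - s • z ∈ s • closure U := by
  rcases eq_or_ne s 0 with rfl | hs
  · have : φ (h * X.toFun 0) - φ h - (0:ℝ) • z = (0:ℝ) • (0:Y) := by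
      simp [X.map_zero]
    rw [this]
    exact Set.smul_mem_smul_set (subset_closure hU0)
  · by_contra hq
    obtain ⟨f, u, hfu, huq⟩ :=
      geometric_hahn_banach_closed_point ((hU.closure).smul s)
        ((isClosed_closure).smul_of_ne_zero hs) hq
    set ψ : ℝ → ℝ := fun r => f (φ (h * X.toFun r)) with hψ
    have hder : ∀ τ : ℝ, HasDerivAt ψ (f (Dx (h * X.toFun τ))) τ :=
      fun τ => psi_hasDerivAt φ X Dx hD f h τ
    have hcont : ∀ a b : ℝ, ContinuousOn ψ (Set.Icc a b) :=
      fun a b x _ => (hder x).continuousAt.continuousWithinAt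
    obtain ⟨τ, hτ, hF⟩ : ∃ τ ∈ Set.uIcc (0:ℝ) s,
        ψ s - ψ 0 = s * f (Dx (h * X.toFun τ)) := by
      rcases lt_or_gt_of_ne hs with h1 | h1
      · obtain ⟨τ, hτ, hval⟩ := exists_hasDerivAt_eq_slope ψ
          (fun r => f (Dx (h * X.toFun r))) h1 (hcont s 0) (fun x _ => hder x)
        refine ⟨τ, ?_, ?_⟩
        · have := Set.Ioo_subset_Icc_self hτ
          rw [Set.uIcc_of_ge h1.le]
          exact this
        · have hval2 : f (Dx (h * X.toFun τ)) * (-s) = ψ 0 - ψ s := by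
            rw [hval]; field_simp; ring
          linear_combination hval2
      · obtain ⟨τ, hτ, hval⟩ := exists_hasDerivAt_eq_slope ψ
          (fun r => f (Dx (h * X.toFun r))) h1 (hcont 0 s) (fun x _ => hder x)
        refine ⟨τ, ?_, ?_⟩
        · have := Set.Ioo_subset_Icc_self hτ
          rw [Set.uIcc_of_le h1.le]
          exact this
        · rw [sub_zero, eq_div_iff hs] at hval
          linear_combination -hval
    have hψ0 : ψ 0 = f (φ h) := by simp [hψ, X.map_zero]
    set q := φ (h * X.toFun s) - φ h - s • z with hqdef
    have hfq : f q = f (s • (Dx (h * X.toFun τ) - z)) := by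
      simp only [hqdef, map_sub, map_smul, smul_eq_mul]
      have : f (φ (h * X.toFun s)) - f (φ h) = ψ s - ψ 0 := by rw [hψ0]
      rw [this, hF]
      ring
    have hb : s • (Dx (h * X.toFun τ) - z) ∈ s • closure U :=
      Set.smul_mem_smul_set (subset_closure (hmem τ hτ))
    have := hfu _ hb
    rw [← hfq] at this
    exact absurd (this.trans huq) (lt_irrefl _)

/-- A sum of `n` elements of a convex set containing `0` lies in `(n : ℝ) • K`. -/
lemma sum_mem_nat_smul {Y : Type*} [AddCommGroup Y] [Module ℝ Y] {K : Set Y}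
    (hK : Convex ℝ K) (h0 : (0:Y) ∈ K) (f : ℕ → Y) :
    ∀ n : ℕ, (∀ k < n, f k ∈ K) → ∃ x ∈ K, ∑ k ∈ Finset.range n, f k = (n : ℝ) • x := by
  intro n
  induction n with
  | zero => exact fun _ => ⟨0, h0, by simp⟩
  | succ n ih =>
    intro hf
    obtain ⟨x, hx, hsum⟩ := ih (fun k hk => hf k (hk.trans (Nat.lt_succ_self n)))
    have hn1 : (0:ℝ) < (n:ℝ) + 1 := by positivity
    refine ⟨((n:ℝ) / ((n:ℝ)+1)) • x + ((1:ℝ)/((n:ℝ)+1)) • f n,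
      hK hx (hf n (Nat.lt_succ_self n)) (by positivity) (by positivity) (by field_simp), ?_⟩
    rw [Finset.sum_range_succ, hsum, smul_add, smul_smul, smul_smul]
    push_cast
    rw [show ((n:ℝ)+1) * ((n:ℝ)/((n:ℝ)+1)) = (n:ℝ) by field_simp,
      show ((n:ℝ)+1) * (1/((n:ℝ)+1)) = 1 by field_simp, one_smul]

lemma closure_subset_add_nhds {Y : Type*} [AddCommGroup Y] [TopologicalSpace Y]
    [IsTopologicalAddGroup Y] (S : Set Y) {M : Set Y} (hM : M ∈ 𝓝 (0:Y)) :
    closure S ⊆ S + M := by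
  intro x hx
  have hM' : (fun y : Y => x - y) ⁻¹' M ∈ 𝓝 x := by
    have : ContinuousAt (fun y : Y => x - y) x := (continuous_const.sub continuous_id).continuousAt
    apply this.preimage_mem_nhds
    simpa using hM
  obtain ⟨y, hy1, hy2⟩ := mem_closure_iff_nhds.mp hx _ hM'
  exact ⟨y, hy2, x - y, hy1, by module⟩

lemma nhds_zero_six {Y : Type*} [AddCommGroup Y] [TopologicalSpace Y]
    [IsTopologicalAddGroup Y] {N : Set Y} (hN : N ∈ 𝓝 (0:Y)) :
    ∃ M ∈ 𝓝 (0:Y), ∀ a ∈ M, ∀ b ∈ M, ∀ c ∈ M, ∀ d ∈ M, ∀ e ∈ M, ∀ f ∈ M,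
      a + b + c + d + e + f ∈ N := by
  obtain ⟨M1, hM1, h1⟩ := exists_nhds_zero_half hN
  obtain ⟨M2, hM2, h2⟩ := exists_nhds_zero_half hM1
  obtain ⟨M3, hM3, h3⟩ := exists_nhds_zero_half hM2
  have h03 : (0:Y) ∈ M3 := mem_of_mem_nhds hM3
  refine ⟨M3, hM3, fun a ha b hb c hc d hd e he f hf => ?_⟩
  have : a + b + c + d + e + f = ((a + b) + (c + d)) + ((e + f) + (0 + 0)) := by abel
  rw [this]
  exact h1 _ (h2 _ (h3 _ ha _ hb) _ (h3 _ hc _ hd)) _ (h2 _ (h3 _ he _ hf) _ (h3 _ h03 _ h03))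

/-- Product of three elements of a suitable neighborhood. -/
lemma nhds_one_three {G : Type*} [Group G] [TopologicalSpace G] [IsTopologicalGroup G]
    {Ω : Set G} (hΩ : Ω ∈ 𝓝 (1:G)) :
    ∃ Θ ∈ 𝓝 (1:G), (1:G) ∈ Θ ∧ ∀ a ∈ Θ, ∀ b ∈ Θ, ∀ c ∈ Θ, a * b * c ∈ Ω := by
  obtain ⟨Θ', hΘ'o, hΘ'1, hΘ'm⟩ := exists_open_nhds_one_mul_subset hΩ
  obtain ⟨Θ, hΘo, hΘ1, hΘm⟩ := exists_open_nhds_one_mul_subset (hΘ'o.mem_nhds hΘ'1)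
  refine ⟨Θ, hΘo.mem_nhds hΘ1, hΘ1, fun a ha b hb c hc => ?_⟩
  have hab : a * b ∈ Θ' := hΘm (Set.mul_mem_mul ha hb)
  have hc' : c ∈ Θ' := by
    have := hΘm (Set.mul_mem_mul hc hΘ1)
    simpa using this
  exact hΘ'm (Set.mul_mem_mul hab hc')

lemma dirDeriv_smul' {G Y V : Type*} [Group G] [TopologicalSpace G]
    [AddCommGroup Y] [Module ℝ Y] [TopologicalSpace Y] [IsTopologicalAddGroup Y]
    [ContinuousSMul ℝ Y] [T2Space Y]
    [AddCommGroup V] [Module ℝ V]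
    (ι : V → OneParamSubgroup G)
    (hscal : ∀ (c : ℝ) (v : V) (s : ℝ), (ι (c • v)).toFun s = (ι v).toFun (c * s))
    (φ : G → Y) (D : OneParamSubgroup G → G → Y)
    (hD : ∀ X g, HasDirDerivAt φ X g (D X g)) (g : G) (c : ℝ) (v : V) :
    D (ι (c • v)) g = c • D (ι v) g := by
  refine dirDeriv_unique (hD _ g) ?_
  unfold HasDirDerivAt
  have heq : ∀ t : ℝ, (ι (c • v)).toFun t = (ι v).toFun (c * t) := hscal c v
  rcases eq_or_ne c 0 with rfl | hc
  · have : ∀ t : ℝ, t⁻¹ • (φ (g * (ι ((0:ℝ) • v)).toFun t) - φ g) = (0:Y) := by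
      intro t
      rw [heq t, zero_mul, (ι v).map_zero, mul_one, sub_self, smul_zero]
    rw [show ((0:ℝ) • D (ι v) g) = 0 by simp]
    exact tendsto_const_nhds.congr (fun t => (this t).symm)
  · have hmap : Tendsto (fun t : ℝ => c * t) (𝓝[≠] (0:ℝ)) (𝓝[≠] (0:ℝ)) := by
      apply tendsto_nhdsWithin_of_tendsto_nhds_of_eventually_within
      · have : Tendsto (fun t : ℝ => c * t) (𝓝 0) (𝓝 (c * 0)) :=
          (continuous_const.mul continuous_id).tendsto 0
        simpa using this.mono_left nhdsWithin_le_nhds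
      · filter_upwards [self_mem_nhdsWithin] with t ht
        simp only [Set.mem_compl_iff, Set.mem_singleton_iff] at ht ⊢
        exact mul_ne_zero hc ht
    have hcomp := ((hD (ι v) g).comp hmap).const_smul c
    refine hcomp.congr' ?_
    filter_upwards [self_mem_nhdsWithin] with t ht
    simp only [Set.mem_compl_iff, Set.mem_singleton_iff] at ht
    simp only [Function.comp_apply, heq t]
    rw [smul_smul, mul_inv, show c * (c⁻¹ * t⁻¹) = t⁻¹ by
      rw [← mul_assoc, mul_inv_cancel₀ hc, one_mul]]

lemma abs_le_of_mem_uIcc_zero {τ s : ℝ} (h : τ ∈ Set.uIcc (0:ℝ) s) : |τ| ≤ |s| := by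
  rcases le_total 0 s with hs | hs
  · rw [Set.uIcc_of_le hs] at h
    rw [abs_of_nonneg h.1, abs_of_nonneg hs]; exact h.2
  · rw [Set.uIcc_of_ge hs] at h
    rw [abs_of_nonpos h.2, abs_of_nonpos hs]; exact neg_le_neg h.1

lemma dirDeriv_add' {G Y : Type*} [Group G] [TopologicalSpace G] [IsTopologicalGroup G]
    [AddCommGroup Y] [Module ℝ Y] [TopologicalSpace Y] [IsTopologicalAddGroup Y]
    [ContinuousSMul ℝ Y] [LocallyConvexSpace ℝ Y] [T2Space Y]
    (X X₁ X₂ : OneParamSubgroup G) (hT : TrotterSum X X₁ X₂)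
    (φ : G → Y) (D : OneParamSubgroup G → G → Y)
    (hluc : LocallyLeftUC φ) (hD : ∀ X g, HasDirDerivAt φ X g (D X g))
    (hDluc : ∀ X, LocallyLeftUC (D X)) (g : G) :
    D X g = D X₁ g + D X₂ g := by
  set z₁ := D X₁ g with hz₁
  set z₂ := D X₂ g with hz₂
  have main : ∀ N ∈ 𝓝 (0:Y), D X g - (z₁ + z₂) ∈ N := by
    intro N hN
    obtain ⟨M, hM, hM6⟩ := nhds_zero_six hN
    obtain ⟨U, ⟨hUnhds, hUconv⟩, hUM⟩ :=
      (((locallyConvexSpace_iff ℝ Y).mp inferInstance 0).mem_iff).mp hM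
    have hU0 : (0:Y) ∈ U := mem_of_mem_nhds hUnhds
    set C := closure U with hC
    have hC0 : (0:Y) ∈ C := subset_closure hU0
    have hCconv : Convex ℝ C := hUconv.closure
    obtain ⟨V₀, hV₀, Hφ⟩ := hluc g
    obtain ⟨V₁, hV₁, H1⟩ := hDluc X₁ g
    obtain ⟨V₂, hV₂, H2⟩ := hDluc X₂ g
    obtain ⟨W₁, hW₁, HW1⟩ := H1 U hUnhds
    obtain ⟨W₂, hW₂, HW2⟩ := H2 U hUnhds
    set Ω : Set G := ((fun x => g * x) ⁻¹' (V₀ ∩ V₁ ∩ V₂)) ∩ ((fun x => x⁻¹) ⁻¹' (W₁ ∩ W₂))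
      with hΩdef
    have hΩ : Ω ∈ 𝓝 (1:G) := by
      apply Filter.inter_mem
      · apply ContinuousAt.preimage_mem_nhds (continuous_mul_left g).continuousAt
        rw [mul_one]
        exact Filter.inter_mem (Filter.inter_mem hV₀ hV₁) hV₂
      · apply ContinuousAt.preimage_mem_nhds continuous_inv.continuousAt
        rw [inv_one]
        exact Filter.inter_mem hW₁ hW₂
    have hΩprop : ∀ ω ∈ Ω, g * ω ∈ V₀ ∧ g * ω ∈ V₁ ∧ g * ω ∈ V₂ ∧ ω⁻¹ ∈ W₁ ∧ ω⁻¹ ∈ W₂ := by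
      intro ω hω
      rw [hΩdef] at hω
      exact ⟨hω.1.1.1, hω.1.1.2, hω.1.2, hω.2.1, hω.2.2⟩
    obtain ⟨Θ, hΘ, hΘ1, hΘ3⟩ := nhds_one_three hΩ
    obtain ⟨Θ₀, hΘ₀, hΘ₀1, hΘ₀3⟩ := nhds_one_three hΘ
    have hΘ₀2 : ∀ a ∈ Θ₀, ∀ b ∈ Θ₀, a * b ∈ Θ := fun a ha b hb => by
      simpa using hΘ₀3 a ha b hb 1 hΘ₀1
    have hΘsubΩ : Θ ⊆ Ω := fun a ha => by simpa using hΘ3 a ha 1 hΘ1 1 hΘ1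
    obtain ⟨δ, hδpos, hδprop⟩ : ∃ δ > 0, ∀ r : ℝ, |r| ≤ δ →
        X.toFun r ∈ Θ₀ ∧ X₁.toFun r ∈ Θ ∧ X₂.toFun r ∈ Θ ∧ g * X.toFun r ∈ V₀ := by
      have hA : (X.toFun ⁻¹' Θ₀ ∩ X₁.toFun ⁻¹' Θ ∩ X₂.toFun ⁻¹' Θ ∩
          (fun r => g * X.toFun r) ⁻¹' V₀) ∈ 𝓝 (0:ℝ) := by
        refine Filter.inter_mem (Filter.inter_mem (Filter.inter_mem ?_ ?_) ?_) ?_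
        · exact X.continuous_toFun.continuousAt.preimage_mem_nhds
            (by rw [X.map_zero]; exact hΘ₀)
        · exact X₁.continuous_toFun.continuousAt.preimage_mem_nhds
            (by rw [X₁.map_zero]; exact hΘ)
        · exact X₂.continuous_toFun.continuousAt.preimage_mem_nhds
            (by rw [X₂.map_zero]; exact hΘ)
        · refine ((continuous_mul_left g).comp X.continuous_toFun).continuousAt.preimage_mem_nhds ?_
          show V₀ ∈ 𝓝 (g * X.toFun 0)
          rw [X.map_zero, mul_one]
          exact hV₀
      obtain ⟨ε, hε, hball⟩ := Metric.mem_nhds_iff.mp hA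
      refine ⟨ε/2, by positivity, fun r hr => ?_⟩
      have hrball : r ∈ Metric.ball (0:ℝ) ε := by
        rw [Metric.mem_ball, Real.dist_eq, sub_zero]; linarith
      have hmem := hball hrball
      exact ⟨hmem.1.1.1, hmem.1.1.2, hmem.1.2, hmem.2⟩
    set Q : ℝ → Y := fun t => t⁻¹ • (φ (g * X.toFun t) - φ g) with hQdef
    set S : Set Y := U + (C + C) with hSdef
    have hev : ∀ᶠ t in 𝓝[≠] (0:ℝ), Q t - (z₁ + z₂) ∈ S := by
      have hδnhds : Metric.closedBall (0:ℝ) δ ∈ 𝓝 (0:ℝ) := Metric.closedBall_mem_nhds 0 hδpos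
      filter_upwards [mem_nhdsWithin_of_mem_nhds hδnhds, self_mem_nhdsWithin] with t htδ' ht0'
      have htδ : |t| ≤ δ := by
        rw [Metric.mem_closedBall, Real.dist_eq, sub_zero] at htδ'
        exact htδ'
      have ht0 : t ≠ 0 := by simpa using ht0'
      have htU : t • U ∈ 𝓝 (0:Y) := by
        have := smul_mem_nhds_smul₀ ht0 hUnhds
        simpa using this
      obtain ⟨W₀, hW₀, HW0⟩ := Hφ (t • U) htU
      obtain ⟨N₁, hN₁⟩ := hT (Set.Icc (-|t|) (|t|)) isCompact_Icc (W₀ ∩ Θ₀)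
        (Filter.inter_mem hW₀ hΘ₀)
      obtain ⟨δ₂, hδ₂pos, hδ₂⟩ : ∃ δ₂ > 0, ∀ s' : ℝ, |s'| ≤ δ₂ → ∀ k < N₁,
          (X₁.toFun s' * X₂.toFun s') ^ k ∈ Θ := by
        have hA : (⋂ k ∈ Finset.range N₁, {s' : ℝ | (X₁.toFun s' * X₂.toFun s') ^ k ∈ Θ})
            ∈ 𝓝 (0:ℝ) := by
          rw [Filter.biInter_finset_mem]
          intro k _
          have hcont : Continuous fun s' : ℝ => (X₁.toFun s' * X₂.toFun s') ^ k :=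
            (X₁.continuous_toFun.mul X₂.continuous_toFun).pow k
          refine hcont.continuousAt.preimage_mem_nhds ?_
          show Θ ∈ 𝓝 ((X₁.toFun 0 * X₂.toFun 0) ^ k)
          rw [X₁.map_zero, X₂.map_zero, mul_one, one_pow]
          exact hΘ
        obtain ⟨ε, hε, hball⟩ := Metric.mem_nhds_iff.mp hA
        refine ⟨ε/2, by positivity, fun s' hs' k hk => ?_⟩
        have hmem := hball (show s' ∈ Metric.ball (0:ℝ) ε by
          rw [Metric.mem_ball, Real.dist_eq, sub_zero]; linarith)
        exact Set.mem_iInter₂.mp hmem k (Finset.mem_range.mpr hk)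
      set n : ℕ := max N₁ (⌈|t|/δ₂⌉₊ + 1) with hndef
      have hnN : N₁ ≤ n := le_max_left _ _
      have hn1 : 1 ≤ n := le_trans (Nat.succ_le_succ (Nat.zero_le _)) (le_max_right _ _)
      have hnpos : (0:ℝ) < (n:ℝ) := by exact_mod_cast hn1
      have hn0 : (n:ℝ) ≠ 0 := hnpos.ne'
      set s : ℝ := t / (n:ℝ) with hsdef
      have hns : (n:ℝ) * s = t := by
        rw [hsdef, mul_div_cancel₀ _ hn0]
      have hsabs : |s| ≤ |t| := by
        rw [hsdef, abs_div, abs_of_pos hnpos]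
        exact div_le_self (abs_nonneg t) (by exact_mod_cast hn1)
      have hsδ : |s| ≤ δ := le_trans hsabs htδ
      have hsδ₂ : |s| ≤ δ₂ := by
        have hceil : |t|/δ₂ ≤ (n:ℝ) := by
          refine le_trans (Nat.le_ceil _) ?_
          have h1 : (⌈|t|/δ₂⌉₊ : ℝ) ≤ ((⌈|t|/δ₂⌉₊ + 1 : ℕ) : ℝ) := by push_cast; linarith
          refine le_trans h1 ?_
          exact_mod_cast le_max_right N₁ (⌈|t|/δ₂⌉₊ + 1)
        rw [hsdef, abs_div, abs_of_pos hnpos, div_le_iff₀ hnpos]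
        calc |t| = (|t|/δ₂) * δ₂ := by rw [div_mul_cancel₀ _ hδ₂pos.ne']
          _ ≤ (n:ℝ) * δ₂ := mul_le_mul_of_nonneg_right hceil hδ₂pos.le
          _ = δ₂ * (n:ℝ) := mul_comm _ _
      set P : G := X₁.toFun s * X₂.toFun s with hPdef
      have hPk : ∀ k, k ≤ n → P ^ k ∈ Θ := by
        intro k hk
        rcases lt_or_ge k N₁ with hkN | hkN
        · exact hδ₂ s hsδ₂ k hkN
        · rcases Nat.eq_zero_or_pos k with rfl | hkpos
          · rw [pow_zero]; exact hΘ1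
          · have hk0 : (k:ℝ) ≠ 0 := Nat.cast_ne_zero.mpr hkpos.ne'
            have hksabs : |(k:ℝ) * s| ≤ |t| := by
              rw [abs_mul, Nat.abs_cast]
              calc (k:ℝ) * |s| ≤ (n:ℝ) * |s| :=
                    mul_le_mul_of_nonneg_right (by exact_mod_cast hk) (abs_nonneg s)
                _ = |(n:ℝ) * s| := by rw [abs_mul, Nat.abs_cast]
                _ = |t| := by rw [hns]
            have hts : (k:ℝ) * s ∈ Set.Icc (-|t|) (|t|) := by
              constructor
              · linarith [neg_abs_le ((k:ℝ)*s)]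
              · exact le_trans (le_abs_self _) hksabs
            have htrot := hN₁ k hkN ((k:ℝ)*s) hts
            have hdiv : ((k:ℝ)*s)/(k:ℝ) = s := by field_simp
            rw [hdiv] at htrot
            have hXk : X.toFun ((k:ℝ)*s) ∈ Θ₀ := (hδprop _ (le_trans hksabs htδ)).1
            have hfin := hΘ₀2 _ hXk _ htrot.2
            rwa [mul_inv_cancel_left] at hfin
      have hfull : (X.toFun t)⁻¹ * P ^ n ∈ W₀ := by
        have hts : t ∈ Set.Icc (-|t|) (|t|) := ⟨neg_abs_le t, le_abs_self t⟩
        have htrot := hN₁ n hnN t hts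
        rw [← hsdef] at htrot
        exact htrot.1
      have hincB : ∀ k, k ≤ n →
          φ (g * P ^ k * X₁.toFun s) - φ (g * P ^ k) - s • z₁ ∈ s • C := by
        intro k hk
        refine increment_mem φ X₁ (D X₁) (hD X₁) hUconv hU0 (g * P ^ k) s ?_
        intro τ hτ
        have hτδ : |τ| ≤ δ := le_trans (abs_le_of_mem_uIcc_zero hτ) hsδ
        have hω : P ^ k * X₁.toFun τ ∈ Ω := by
          have := hΘ3 _ (hPk k hk) _ ((hδprop τ hτδ).2.1) 1 hΘ1
          simpa using this
        have hprop := hΩprop _ hω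
        have hx : g * P ^ k * X₁.toFun τ = g * (P ^ k * X₁.toFun τ) := by rw [mul_assoc]
        rw [hx]
        have he : (g * (P ^ k * X₁.toFun τ))⁻¹ * g = (P ^ k * X₁.toFun τ)⁻¹ := by group
        exact HW1 _ hprop.2.1 g (mem_of_mem_nhds hV₁) (by rw [he]; exact hprop.2.2.2.1)
      have hincA : ∀ k, k ≤ n →
          φ (g * P ^ k * X₁.toFun s * X₂.toFun s) - φ (g * P ^ k * X₁.toFun s) - s • z₂
            ∈ s • C := by
        intro k hk
        refine increment_mem φ X₂ (D X₂) (hD X₂) hUconv hU0 (g * P ^ k * X₁.toFun s) s ?_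
        intro τ hτ
        have hτδ : |τ| ≤ δ := le_trans (abs_le_of_mem_uIcc_zero hτ) hsδ
        have hω : P ^ k * X₁.toFun s * X₂.toFun τ ∈ Ω :=
          hΘ3 _ (hPk k hk) _ ((hδprop s hsδ).2.1) _ ((hδprop τ hτδ).2.2.1)
        have hprop := hΩprop _ hω
        have hx : g * P ^ k * X₁.toFun s * X₂.toFun τ
            = g * (P ^ k * X₁.toFun s * X₂.toFun τ) := by group
        rw [hx]
        have he : (g * (P ^ k * X₁.toFun s * X₂.toFun τ))⁻¹ * g
            = (P ^ k * X₁.toFun s * X₂.toFun τ)⁻¹ := by group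
        exact HW2 _ hprop.2.2.1 g (mem_of_mem_nhds hV₂) (by rw [he]; exact hprop.2.2.2.2)
      set F : ℕ → Y := fun k => φ (g * P ^ (k+1)) - φ (g * P ^ k) - (s • z₁ + s • z₂)
        with hFdef
      have hKKconv : Convex ℝ ((s • C) + (s • C)) := (hCconv.smul s).add (hCconv.smul s)
      have hKK0 : (0:Y) ∈ (s • C) + (s • C) := by
        have h01 : (0:Y) ∈ s • C := ⟨0, hC0, smul_zero s⟩
        simpa using Set.add_mem_add h01 h01
      have hFmem : ∀ k, k < n → F k ∈ (s • C) + (s • C) := by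
        intro k hk
        have hAk := hincA k hk.le
        have hBk := hincB k hk.le
        have hFk : F k = (φ (g * P ^ k * X₁.toFun s * X₂.toFun s)
              - φ (g * P ^ k * X₁.toFun s) - s • z₂)
            + (φ (g * P ^ k * X₁.toFun s) - φ (g * P ^ k) - s • z₁) := by
          have hp : g * P ^ (k+1) = g * P ^ k * X₁.toFun s * X₂.toFun s := by
            rw [pow_succ, hPdef]
            group
          show φ (g * P ^ (k+1)) - φ (g * P ^ k) - (s • z₁ + s • z₂) = _
          rw [hp]; abel
        rw [hFk]
        exact Set.add_mem_add hAk hBk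
      obtain ⟨x, hxKK, hsum⟩ := sum_mem_nat_smul hKKconv hKK0 F n hFmem
      obtain ⟨x₁, hx₁, x₂, hx₂, hxe⟩ := Set.mem_add.mp hxKK
      obtain ⟨c₁, hc₁, hc₁e⟩ := Set.mem_smul_set.mp hx₁
      obtain ⟨c₂, hc₂, hc₂e⟩ := Set.mem_smul_set.mp hx₂
      have htel : ∑ k ∈ Finset.range n, (φ (g * P ^ (k+1)) - φ (g * P ^ k))
          = φ (g * P ^ n) - φ g := by
        rw [Finset.sum_range_sub (fun k => φ (g * P ^ k)), pow_zero, mul_one]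
      have hsplit : ∑ k ∈ Finset.range n, F k
          = (φ (g * P ^ n) - φ g) - (n:ℝ) • (s • z₁ + s • z₂) := by
        calc ∑ k ∈ Finset.range n, F k
            = ∑ k ∈ Finset.range n, (φ (g * P ^ (k+1)) - φ (g * P ^ k))
              - ∑ _k ∈ Finset.range n, (s • z₁ + s • z₂) := by
              rw [← Finset.sum_sub_distrib]
          _ = (φ (g * P ^ n) - φ g) - (n:ℝ) • (s • z₁ + s • z₂) := by
              rw [htel, Finset.sum_const, Finset.card_range, Nat.cast_smul_eq_nsmul ℝ]
      have hx0 : g * X.toFun t ∈ V₀ := (hδprop t htδ).2.2.2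
      have hy0 : g * P ^ n ∈ V₀ := (hΩprop _ (hΘsubΩ (hPk n le_rfl))).1
      have hw0 : (g * X.toFun t)⁻¹ * (g * P ^ n) ∈ W₀ := by
        have he : (g * X.toFun t)⁻¹ * (g * P ^ n) = (X.toFun t)⁻¹ * P ^ n := by group
        rw [he]; exact hfull
      obtain ⟨u₀, hu₀, hu₀e⟩ := Set.mem_smul_set.mp (HW0 _ hx0 _ hy0 hw0)
      have hEqn : φ (g * P ^ n) - φ g
          = (n:ℝ) • (s • z₁ + s • z₂) + ((n:ℝ) • (s • c₁) + (n:ℝ) • (s • c₂)) := by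
        have h8 : (n:ℝ) • x = (n:ℝ) • (s • c₁) + (n:ℝ) • (s • c₂) := by
          rw [← hxe, ← hc₁e, ← hc₂e, smul_add]
        have h9 := hsplit.symm.trans hsum
        rw [h8] at h9
        have h10 := sub_eq_iff_eq_add.mp h9
        rw [h10]; abel
      have hEqfull : φ (g * X.toFun t) - φ g
          = t • u₀ + ((n:ℝ) • (s • z₁ + s • z₂) + ((n:ℝ) • (s • c₁) + (n:ℝ) • (s • c₂))) := by
        rw [← sub_add_sub_cancel (φ (g * X.toFun t)) (φ (g * P ^ n)) (φ g), ← hu₀e, hEqn]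
      have hQmem : Q t - (z₁ + z₂) = u₀ + (c₁ + c₂) := by
        show t⁻¹ • (φ (g * X.toFun t) - φ g) - (z₁ + z₂) = u₀ + (c₁ + c₂)
        rw [hEqfull]
        simp only [smul_add, smul_smul, hns]
        match_scalars <;> field_simp <;> ring
      rw [hSdef]
      exact Set.mem_add.mpr ⟨u₀, hu₀, c₁ + c₂,
        Set.mem_add.mpr ⟨c₁, hc₁, c₂, hc₂, rfl⟩, hQmem.symm⟩
    have hlim : Tendsto (fun t => Q t - (z₁ + z₂)) (𝓝[≠] (0:ℝ)) (𝓝 (D X g - (z₁ + z₂))) :=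
      (hD X g).sub_const _
    have hclos : D X g - (z₁ + z₂) ∈ closure S := mem_closure_of_tendsto hlim hev
    have hsub : closure S ⊆ N := by
      intro y hy
      obtain ⟨y', hy', m, hm, hye⟩ := Set.mem_add.mp (closure_subset_add_nhds S hM hy)
      obtain ⟨u, hu, cc, hcc, hy'e⟩ := Set.mem_add.mp hy'
      obtain ⟨c₁, hc₁, c₂, hc₂, hcce⟩ := Set.mem_add.mp hcc
      obtain ⟨u₁, hu₁, m₁, hm₁, hc₁e⟩ := Set.mem_add.mp (closure_subset_add_nhds U hM hc₁)
      obtain ⟨u₂, hu₂, m₂, hm₂, hc₂e⟩ := Set.mem_add.mp (closure_subset_add_nhds U hM hc₂)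
      have hyeq : y = u + u₁ + m₁ + u₂ + m₂ + m := by
        rw [← hye, ← hy'e, ← hcce, ← hc₁e, ← hc₂e]; abel
      rw [hyeq]
      exact hM6 _ (hUM hu) _ (hUM hu₁) _ hm₁ _ (hUM hu₂) _ hm₂ _ hm
    exact hsub hclos
  have hzero : D X g - (z₁ + z₂) = 0 := by
    by_contra hne
    have h0 : (0:Y) ∈ ({D X g - (z₁ + z₂)}ᶜ : Set Y) := by
      simp only [Set.mem_compl_iff, Set.mem_singleton_iff]
      exact fun h => hne h.symm
    have := main _ ((isOpen_compl_singleton).mem_nhds h0)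
    simp at this
  exact sub_eq_zero.mp hzero


theorem dirDeriv_linear
    {G Y V : Type*} [Group G] [TopologicalSpace G] [IsTopologicalGroup G]
    [AddCommGroup Y] [Module ℝ Y] [TopologicalSpace Y] [IsTopologicalAddGroup Y]
    [ContinuousSMul ℝ Y] [LocallyConvexSpace ℝ Y] [T2Space Y]
    [AddCommGroup V] [Module ℝ V]
    (ι : V → OneParamSubgroup G)
    (hscal : ∀ (c : ℝ) (v : V) (s : ℝ), (ι (c • v)).toFun s = (ι v).toFun (c * s))
    (hadd : ∀ v w : V, TrotterSum (ι (v + w)) (ι v) (ι w))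
    (φ : G → Y) (D : OneParamSubgroup G → G → Y) (hφ : IsLUC1 φ D) (g : G) :
    IsLinearMap ℝ (fun v : V => D (ι v) g) := by
  constructor
  · intro v w
    exact dirDeriv_add' (ι (v+w)) (ι v) (ι w) (hadd v w) φ D hφ.1 hφ.2.1 hφ.2.2 g
  · intro c v
    exact dirDeriv_smul' ι hscal φ D hφ.2.1 g c v
end

section
/- Let G be a topological group, Y a Hausdorff locally convex real topological vector space, and π a representation of G by continuous linear operators on Y such that the action map G × Y → Y, (g, y) ↦ π(g)y, is continuous and such that there is a neighborhood V of the identity in G for which the family of operators {π(g) : g ∈ V} is equicontinuous. Then for every y ∈ Y the following are equivalent: (i) for every one-parameter subgroup X of G, dπ(X)y exists; (ii) the orbit map G → Y, g ↦ π(g)y, is of class LUC¹. -/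
open Filter Topology Pointwise

theorem locallyLeftUC_orbit_aux {G Y : Type*} [Group G] [TopologicalSpace G]
    [IsTopologicalGroup G]
    [AddCommGroup Y] [Module ℝ Y] [TopologicalSpace Y] [IsTopologicalAddGroup Y]
    (π : G → Y →L[ℝ] Y)
    (hπ_one : π 1 = ContinuousLinearMap.id ℝ Y)
    (hπ_mul : ∀ g h : G, π (g * h) = (π g).comp (π h))
    (hπ_cont : Continuous fun p : G × Y => π p.1 p.2)
    (hequi : ∃ V ∈ 𝓝 (1 : G), ∀ U ∈ 𝓝 (0 : Y), ∃ U' ∈ 𝓝 (0 : Y),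
      ∀ g ∈ V, ∀ z ∈ U', π g z ∈ U)
    (y0 : Y) : LocallyLeftUC (fun g : G => π g y0) := by
  intro g₀
  obtain ⟨V₀, hV₀, hVe⟩ := hequi
  refine ⟨(fun x => g₀⁻¹ * x) ⁻¹' V₀, ?_, ?_⟩
  · have hc : Continuous fun x : G => g₀⁻¹ * x := continuous_const.mul continuous_id
    have := hc.continuousAt (x := g₀)
    have h1 : g₀⁻¹ * g₀ = 1 := by group
    exact this.preimage_mem_nhds (by rw [h1]; exact hV₀)
  · intro U hU
    have hU₁ : (π g₀) ⁻¹' U ∈ 𝓝 (0 : Y) := by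
      have := ((π g₀).continuous.continuousAt (x := (0 : Y)))
      rw [ContinuousAt, map_zero] at this
      exact this hU
    obtain ⟨U', hU', hU'e⟩ := hVe _ hU₁
    have hcw : Continuous fun w : G => y0 - π w y0 :=
      continuous_const.sub (hπ_cont.comp (continuous_id.prodMk continuous_const))
    have hW : {w : G | y0 - π w y0 ∈ U'} ∈ 𝓝 (1 : G) := by
      have := hcw.continuousAt (x := (1 : G))
      rw [ContinuousAt] at this
      have h0 : y0 - π 1 y0 = 0 := by rw [hπ_one]; simp
      rw [h0] at this
      exact this hU'
    refine ⟨_, hW, ?_⟩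
    intro x hx y' hy' hxy
    have key : π x y0 - π y' y0 = π g₀ (π (g₀⁻¹ * x) (y0 - π (x⁻¹ * y') y0)) := by
      have e1 : π g₀ ((π (g₀⁻¹ * x)) (y0 - π (x⁻¹ * y') y0))
          = π (g₀ * (g₀⁻¹ * x)) (y0 - π (x⁻¹ * y') y0) := by
        rw [hπ_mul g₀ (g₀⁻¹ * x)]; rfl
      have e2 : g₀ * (g₀⁻¹ * x) = x := by group
      rw [e1, e2, map_sub]
      have e3 : π x (π (x⁻¹ * y') y0) = π (x * (x⁻¹ * y')) y0 := by
        rw [hπ_mul x (x⁻¹ * y')]; rfl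
      have e4 : x * (x⁻¹ * y') = y' := by group
      rw [e3, e4]
    rw [key]
    exact hU'e _ hx _ hxy

theorem differentiable_vector_iff_LUC1
    {G Y : Type*} [Group G] [TopologicalSpace G] [IsTopologicalGroup G]
    [AddCommGroup Y] [Module ℝ Y] [TopologicalSpace Y] [IsTopologicalAddGroup Y]
    [ContinuousSMul ℝ Y] [LocallyConvexSpace ℝ Y] [T2Space Y]
    (π : G → Y →L[ℝ] Y)
    (hπ_one : π 1 = ContinuousLinearMap.id ℝ Y)
    (hπ_mul : ∀ g h : G, π (g * h) = (π g).comp (π h))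
    (hπ_cont : Continuous fun p : G × Y => π p.1 p.2)
    (hequi : ∃ V ∈ 𝓝 (1 : G), ∀ U ∈ 𝓝 (0 : Y), ∃ U' ∈ 𝓝 (0 : Y),
      ∀ g ∈ V, ∀ z ∈ U', π g z ∈ U)
    (y : Y) :
    (∀ X : OneParamSubgroup G, ∃ z : Y,
        Tendsto (fun t : ℝ => t⁻¹ • (π (X.toFun t) y - y)) (𝓝[≠] (0 : ℝ)) (𝓝 z)) ↔
      ∃ D : OneParamSubgroup G → G → Y, IsLUC1 (fun g : G => π g y) D := by
  constructor
  · intro h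
    choose z hz using h
    refine ⟨fun X g => π g (z X), ?_, ?_, ?_⟩
    · exact locallyLeftUC_orbit_aux π hπ_one hπ_mul hπ_cont hequi y
    · intro X g
      have hmain : Tendsto (fun t : ℝ => π g (t⁻¹ • (π (X.toFun t) y - y)))
          (𝓝[≠] (0 : ℝ)) (𝓝 (π g (z X))) :=
        ((π g).continuous.tendsto _).comp (hz X)
      refine hmain.congr fun t => ?_
      rw [map_smul, map_sub]
      congr 2
      show π g (π (X.toFun t) y) = π (g * X.toFun t) y
      rw [hπ_mul g (X.toFun t)]; rfl
    · intro X
      exact locallyLeftUC_orbit_aux π hπ_one hπ_mul hπ_cont hequi (z X)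
  · rintro ⟨D, hUC, hderiv, hDUC⟩ X
    refine ⟨D X 1, ?_⟩
    have h1 := hderiv X 1
    unfold HasDirDerivAt at h1
    simpa [hπ_one] using h1
end
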